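/- Let (Y, A, X) be a recollement of abelian categories with A AB3 (cocomplete). If either i^! commutes with direct limits or i^* is exact, then A is AB5 if and only if X and Y are AB5. -/

import Mathlib

open CategoryTheory Limits

universe v u u₁ u₂ u₃

/-- A recollement of categories: adjoint triples `(i^*, i_*, i^!)` and `(j_!, j^*, j_*)`,
with `i_*`, `j_!`, `j_*` fully faithful and the essential image of `i_*` equal to the
kernel of `j^*`. -/
structure Recollement (Y : Type u₁) (A : Type u₂) (X : Type u₃)
    [Category.{v} Y] [Category.{v} A] [Category.{v} X] where
  /-- `i_* : Y ⥤ A` -/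
  iStar : Y ⥤ A
  /-- `i^* : A ⥤ Y` -/
  iUp : A ⥤ Y
  /-- `i^! : A ⥤ Y` -/
  iShriek : A ⥤ Y
  /-- `j^* : A ⥤ X` -/
  jUp : A ⥤ X
  /-- `j_! : X ⥤ A` -/
  jLower : X ⥤ A
  /-- `j_* : X ⥤ A` -/
  jRight : X ⥤ A
  adj_i₁ : iUp ⊣ iStar
  adj_i₂ : iStar ⊣ iShriek
  adj_j₁ : jLower ⊣ jUp
  adj_j₂ : jUp ⊣ jRight
  iStar_full : iStar.Full
  iStar_faithful : iStar.Faithful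
  jLower_full : jLower.Full
  jLower_faithful : jLower.Faithful
  jRight_full : jRight.Full
  jRight_faithful : jRight.Faithful
  essImage_iff : ∀ M : A, iStar.essImage M ↔ IsZero (jUp.obj M)

variable {Y : Type u₁} {A : Type u₂} {X : Type u₃}
  [Category.{v} Y] [Category.{v} A] [Category.{v} X]

/-- The class `C = Ker i^*` of the TTF triple associated to a recollement. -/
def Recollement.C (R : Recollement Y A X) : A → Prop := fun M => IsZero (R.iUp.obj M)

/-- The class `T = Im i_*` of the TTF triple associated to a recollement. -/
def Recollement.T (R : Recollement Y A X) : A → Prop := fun M => R.iStar.essImage M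

/-- The class `F = Ker i^!` of the TTF triple associated to a recollement. -/
def Recollement.F (R : Recollement Y A X) : A → Prop := fun M => IsZero (R.iShriek.obj M)

/-- An (additive) functor between abelian categories is exact if it preserves finite
limits and finite colimits. -/
def IsExactFunctor {C D : Type*} [Category C] [Category D] (G : C ⥤ D) : Prop :=
  Nonempty (PreservesFiniteLimits G) ∧ Nonempty (PreservesFiniteColimits G)

/-- An abelian category is AB5 if it is cocomplete (AB3) and direct limits over any
directed set are exact. -/
structure IsAB5 (C : Type u) [Category.{v} C] [Abelian C] : Prop where
  hasColimits : HasColimits C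
  exactDirected : ∀ (Λ : Type v) [Preorder Λ] [IsDirected Λ (· ≤ ·)] [Nonempty Λ],
    letI := hasColimits
    Nonempty (PreservesFiniteLimits (colim (J := Λ) (C := C)))

section Aux

variable {Λ : Type v} [SmallCategory Λ]

/-- Transfer of monomorphisms along a natural isomorphism. -/
lemma mono_map_of_natIso' {C : Type*} {D : Type*} [Category C] [Category D]
    {F G : C ⥤ D} (e : F ≅ G) {M N : C} (f : M ⟶ N) (h : Mono (G.map f)) :
    Mono (F.map f) := by
  have hf : F.map f = e.hom.app M ≫ G.map f ≫ e.inv.app N := by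
    rw [← Category.assoc, ← e.hom.naturality f, Category.assoc, Iso.hom_inv_id_app,
      Category.comp_id]
  rw [hf]
  exact mono_comp _ _

/-- If `F ⋙ G ≅ 𝟭`, the induced whiskering functors compose to the identity up to iso. -/
noncomputable def whiskCompIso {C : Type u₂} {D : Type u₁} [Category.{v} C] [Category.{v} D]
    (F : D ⥤ C) (G : C ⥤ D) (e : F ⋙ G ≅ 𝟭 D) :
    (Functor.whiskeringRight Λ D C).obj F ⋙ (Functor.whiskeringRight Λ C D).obj G ≅ 𝟭 (Λ ⥤ D) :=
  NatIso.ofComponents (fun K => Functor.isoWhiskerLeft K e ≪≫ K.rightUnitor) (by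
    intro K K' φ
    ext k
    simpa using e.hom.naturality (φ.app k))

/-- When `G` preserves colimits of shape `Λ` and `F ⋙ G ≅ 𝟭`, whiskering by `F`, taking a
colimit and applying `G` is isomorphic to the colimit functor. -/
noncomputable def compColimIsoOfRight {C : Type u₂} {D : Type u₁} [Category.{v} C]
    [Category.{v} D] [HasColimitsOfShape Λ C] [HasColimitsOfShape Λ D]
    (F : D ⥤ C) (G : C ⥤ D) (e : F ⋙ G ≅ 𝟭 D) [PreservesColimitsOfShape Λ G] :
    (Functor.whiskeringRight Λ D C).obj F ⋙ (colim ⋙ G) ≅ colim :=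
  Functor.isoWhiskerLeft _ (preservesColimitNatIso (J := Λ) G) ≪≫ (Functor.associator _ _ _).symm ≪≫
    Functor.isoWhiskerRight (whiskCompIso F G e) colim ≪≫ colim.leftUnitor

/-- When `F` preserves colimits of shape `Λ` and `F ⋙ G ≅ 𝟭`, whiskering by `F`, taking a
colimit and applying `G` is isomorphic to the colimit functor. -/
noncomputable def compColimIsoOfLeft {C : Type u₂} {D : Type u₁} [Category.{v} C]
    [Category.{v} D] [HasColimitsOfShape Λ C] [HasColimitsOfShape Λ D]
    (F : D ⥤ C) (G : C ⥤ D) (e : F ⋙ G ≅ 𝟭 D) [PreservesColimitsOfShape Λ F] :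
    (Functor.whiskeringRight Λ D C).obj F ⋙ (colim ⋙ G) ≅ colim :=
  (Functor.associator _ _ _).symm ≪≫
    Functor.isoWhiskerRight (preservesColimitNatIso (J := Λ) F).symm G ≪≫
    Functor.associator _ _ _ ≪≫ Functor.isoWhiskerLeft colim e ≪≫ colim.rightUnitor

/-- Transfer exactness of `Λ`-colimits along a localization-type situation. -/
lemma preservesFiniteLimits_colim_transfer {C : Type u₂} {D : Type u₁} [Category.{v} C]
    [Category.{v} D] [HasColimitsOfShape Λ C] [HasColimitsOfShape Λ D] [HasFiniteLimits D]
    (F : D ⥤ C) (G : C ⥤ D)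
    (e : (Functor.whiskeringRight Λ D C).obj F ⋙ (colim ⋙ G) ≅ colim)
    [PreservesFiniteLimits F] [PreservesFiniteLimits G]
    [PreservesFiniteLimits (colim (J := Λ) (C := C))] :
    PreservesFiniteLimits (colim (J := Λ) (C := D)) := by
  haveI h1 : PreservesFiniteLimits ((Functor.whiskeringRight Λ D C).obj F) :=
    ⟨fun J _ _ => inferInstance⟩
  haveI h2 : PreservesFiniteLimits ((colim (J := Λ) (C := C)) ⋙ G) :=
    comp_preservesFiniteLimits _ _
  haveI h3 : PreservesFiniteLimits
      ((Functor.whiskeringRight Λ D C).obj F ⋙ ((colim (J := Λ) (C := C)) ⋙ G)) :=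
    comp_preservesFiniteLimits _ _
  exact preservesFiniteLimits_of_natIso e

end Aux

/-- In a recollement, an object killed by `j^*` and by `i^!` (or by `i^*`) is zero. -/
lemma Recollement.isZero_of [Abelian Y] [Abelian A] [Abelian X] (R : Recollement Y A X)
    {M : A} (h1 : IsZero (R.jUp.obj M))
    (h2 : IsZero (R.iShriek.obj M) ∨ IsZero (R.iUp.obj M)) : IsZero M := by
  haveI := R.iStar_full
  haveI := R.iStar_faithful
  obtain ⟨N, ⟨eN⟩⟩ := (R.essImage_iff M).2 h1
  have hN : IsZero N := by
    rcases h2 with h2 | h2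
    · exact IsZero.of_iso h2 (((asIso R.adj_i₂.unit).app N) ≪≫ R.iShriek.mapIso eN)
    · exact IsZero.of_iso h2 (((asIso R.adj_i₁.counit).app N).symm ≪≫ R.iUp.mapIso eN)
  exact IsZero.of_iso (R.iStar.map_isZero hN) eN.symm

/-- In a recollement, a morphism whose images under `j^*` and `i^!` (or `i^*`, if the
latter is left exact) are monomorphisms is itself a monomorphism. -/
lemma Recollement.mono_of [Abelian Y] [Abelian A] [Abelian X] (R : Recollement Y A X)
    {M N : A} (g : M ⟶ N) (h1 : Mono (R.jUp.map g))
    (h2 : Mono (R.iShriek.map g) ∨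
      (Nonempty (PreservesFiniteLimits R.iUp) ∧ Mono (R.iUp.map g))) :
    Mono g := by
  haveI : PreservesLimitsOfSize.{0, 0} R.jUp := R.adj_j₁.rightAdjoint_preservesLimits
  haveI := h1
  have hz1 : IsZero (R.jUp.obj (kernel g)) :=
    IsZero.of_iso (IsZero.of_iso (isZero_zero X) (kernel.ofMono (R.jUp.map g)))
      (PreservesKernel.iso R.jUp g)
  have hz : IsZero (kernel g) := by
    rcases h2 with h2 | ⟨⟨hfl⟩, h2⟩
    · haveI := h2
      haveI : PreservesLimitsOfSize.{0, 0} R.iShriek := R.adj_i₂.rightAdjoint_preservesLimits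
      exact R.isZero_of hz1 (Or.inl
        (IsZero.of_iso (IsZero.of_iso (isZero_zero Y) (kernel.ofMono (R.iShriek.map g)))
          (PreservesKernel.iso R.iShriek g)))
    · haveI := h2
      haveI := hfl
      exact R.isZero_of hz1 (Or.inr
        (IsZero.of_iso (IsZero.of_iso (isZero_zero Y) (kernel.ofMono (R.iUp.map g)))
          (PreservesKernel.iso R.iUp g)))
  exact Preadditive.mono_of_isZero_kernel g hz

/-- Let `(Y, A, X)` be a recollement of abelian categories with `A` AB3. If `i^!`
commutes with direct limits or `i^*` is exact, then `A` is AB5 iff `X` and `Y` are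
AB5. -/
theorem recollement_isAB5_iff [Abelian Y] [Abelian A] [Abelian X]
    (R : Recollement Y A X) [HasCoproducts.{v} A]
    (h : (∀ (Λ : Type v) [Preorder Λ] [IsDirected Λ (· ≤ ·)] [Nonempty Λ],
            Nonempty (PreservesColimitsOfShape Λ R.iShriek)) ∨ IsExactFunctor R.iUp) :
    IsAB5 A ↔ (IsAB5 X ∧ IsAB5 Y) := by
  constructor
  · intro hA
    haveI := hA.hasColimits
    haveI := R.jRight_full
    haveI := R.jRight_faithful
    haveI := R.iStar_full
    haveI := R.iStar_faithful
    haveI : Reflective R.jRight :=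
      { toFull := R.jRight_full, toFaithful := R.jRight_faithful,
        L := R.jUp, adj := R.adj_j₂ }
    haveI hCX : HasColimits X := hasColimits_of_reflective R.jRight
    haveI : Reflective R.iStar :=
      { toFull := R.iStar_full, toFaithful := R.iStar_faithful,
        L := R.iUp, adj := R.adj_i₁ }
    haveI hCY : HasColimits Y := hasColimits_of_reflective R.iStar
    refine ⟨⟨hCX, fun Λ _ _ _ => ?_⟩, ⟨hCY, fun Λ _ _ _ => ?_⟩⟩
    · -- X is AB5
      haveI : PreservesLimitsOfSize.{0, 0} R.jRight := R.adj_j₂.rightAdjoint_preservesLimits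
      haveI : PreservesLimitsOfSize.{0, 0} R.jUp := R.adj_j₁.rightAdjoint_preservesLimits
      haveI : PreservesColimitsOfSize.{v, v} R.jUp := R.adj_j₂.leftAdjoint_preservesColimits
      haveI : PreservesFiniteLimits (colim (J := Λ) (C := A)) := (hA.exactDirected Λ).some
      exact ⟨preservesFiniteLimits_colim_transfer R.jRight R.jUp
        (compColimIsoOfRight R.jRight R.jUp (asIso R.adj_j₂.counit))⟩
    · -- Y is AB5
      haveI : PreservesLimitsOfSize.{0, 0} R.iStar := R.adj_i₁.rightAdjoint_preservesLimits
      haveI : PreservesLimitsOfSize.{0, 0} R.iShriek := R.adj_i₂.rightAdjoint_preservesLimits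
      haveI : PreservesColimitsOfSize.{v, v} R.iStar := R.adj_i₂.leftAdjoint_preservesColimits
      haveI : PreservesFiniteLimits (colim (J := Λ) (C := A)) := (hA.exactDirected Λ).some
      exact ⟨preservesFiniteLimits_colim_transfer R.iStar R.iShriek
        (compColimIsoOfLeft R.iStar R.iShriek ((asIso R.adj_i₂.unit).symm))⟩
  · rintro ⟨hX, hY⟩
    haveI : HasColimits A := has_colimits_of_hasCoequalizers_and_coproducts
    haveI := hX.hasColimits
    haveI := hY.hasColimits
    refine ⟨inferInstance, fun Λ _ _ _ => ?_⟩
    haveI : PreservesFiniteLimits (colim (J := Λ) (C := X)) := (hX.exactDirected Λ).some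
    haveI : PreservesFiniteLimits (colim (J := Λ) (C := Y)) := (hY.exactDirected Λ).some
    haveI : PreservesLimitsOfSize.{0, 0} R.jUp := R.adj_j₁.rightAdjoint_preservesLimits
    haveI : PreservesColimitsOfSize.{v, v} R.jUp := R.adj_j₂.leftAdjoint_preservesColimits
    haveI : PreservesColimitsOfSize.{0, 0} (colim (J := Λ) (C := A)) :=
      colimConstAdj.leftAdjoint_preservesColimits
    refine ⟨((Functor.preservesFiniteLimits_tfae (colim (J := Λ) (C := A))).out 0 3).1 ?_⟩
    intro S hS
    haveI := hS.mono_f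
    refine ⟨hS.exact.map_of_epi_of_preservesCokernel colim hS.epi_g inferInstance, ?_⟩
    have hjm : Mono (Functor.whiskerRight S.f R.jUp) := inferInstance
    have hj : Mono ((colim (J := Λ) (C := A) ⋙ R.jUp).map S.f) :=
      mono_map_of_natIso' (preservesColimitNatIso (J := Λ) R.jUp) S.f
        ((colim (J := Λ) (C := X)).map_mono (Functor.whiskerRight S.f R.jUp))
    rcases h with hsh | hex
    · haveI := (hsh Λ).some
      haveI : PreservesLimitsOfSize.{0, 0} R.iShriek := R.adj_i₂.rightAdjoint_preservesLimits
      haveI : Mono (Functor.whiskerRight S.f R.iShriek) := inferInstance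
      have hi : Mono ((colim (J := Λ) (C := A) ⋙ R.iShriek).map S.f) :=
        mono_map_of_natIso' (preservesColimitNatIso (J := Λ) R.iShriek) S.f
          ((colim (J := Λ) (C := Y)).map_mono (Functor.whiskerRight S.f R.iShriek))
      exact R.mono_of _ hj (Or.inl hi)
    · haveI : PreservesFiniteLimits R.iUp := hex.1.some
      haveI : PreservesColimitsOfSize.{v, v} R.iUp := R.adj_i₁.leftAdjoint_preservesColimits
      haveI : Mono (Functor.whiskerRight S.f R.iUp) := inferInstance
      have hi : Mono ((colim (J := Λ) (C := A) ⋙ R.iUp).map S.f) :=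
        mono_map_of_natIso' (preservesColimitNatIso (J := Λ) R.iUp) S.f
          ((colim (J := Λ) (C := Y)).map_mono (Functor.whiskerRight S.f R.iUp))
      exact R.mono_of _ hj (Or.inr ⟨hex.1, hi⟩)
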